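/- Let (Ω,𝔉,P) be a probability space with a filtration (𝔉_t)_{t=1}^{n+1}, let D ⊆ ℝ^m, and let F : ℝ^m → ℝ be convex with diam_F(D) < ∞. Let (M_t)_{t=1}^{n+1} be an ℝ^m-valued martingale adapted to (𝔉_t)_{t=1}^{n+1} with M_t ∈ D almost surely for every t, and let Δ_1,…,Δ_n be integrable real random variables. Suppose there exist constants α, β ≥ 0 such that for every t ∈ {1,…,n}, the random variable D_F(M_{t+1},M_t) is measurable and E[Δ_t | 𝔉_t] ≤ α + sqrt(β · E[D_F(M_{t+1},M_t) | 𝔉_t]) almost surely. Then E[∑_{t=1}^n Δ_t] ≤ α n + sqrt(n β · diam_F(D)). -/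

import Mathlib

open MeasureTheory
open scoped BigOperators

noncomputable section

/-- The one-sided directional derivative of a convex function `F` at `y` in the
direction `v`: for convex `F` the difference quotients are monotone in `h`, so it
equals the infimum over `h > 0`. -/
def dirDeriv {m : ℕ} (F : (Fin m → ℝ) → ℝ) (y v : Fin m → ℝ) : ℝ :=
  sInf ((fun h : ℝ => (F (y + h • v) - F y) / h) '' Set.Ioi 0)

/-- The Bregman divergence of a convex function `F`. -/
def bregman {m : ℕ} (F : (Fin m → ℝ) → ℝ) (x y : Fin m → ℝ) : ℝ :=
  F x - F y - dirDeriv F y (x - y)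

/-- The diameter of a set with respect to `F`: `sup_{x,y ∈ D} (F x − F y)`. -/
def bregDiam {m : ℕ} (F : (Fin m → ℝ) → ℝ) (D : Set (Fin m → ℝ)) : ℝ :=
  sSup {z | ∃ x ∈ D, ∃ y ∈ D, z = F x - F y}

section Aux

variable {m : ℕ} {F : (Fin m → ℝ) → ℝ}

lemma exists_subgrad (hF : ConvexOn ℝ Set.univ F) (q : Fin m → ℝ) :
    ∃ g : (Fin m → ℝ) →L[ℝ] ℝ, ∀ z, F q + g (z - q) ≤ F z := by
  have hc : Continuous F := hF.locallyLipschitz.continuous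
  set S : Set ((Fin m → ℝ) × ℝ) := {p | F p.1 < p.2} with hS
  have hSconv : Convex ℝ S := by
    intro p hp r hr a b ha hb hab
    simp only [hS, Set.mem_setOf_eq] at *
    calc F (a • p.1 + b • r.1) ≤ a * F p.1 + b * F r.1 :=
          hF.2 (Set.mem_univ _) (Set.mem_univ _) ha hb hab
      _ < a * p.2 + b * r.2 := by
          rcases eq_or_lt_of_le ha with ha0 | ha0
          · rcases eq_or_lt_of_le hb with hb0 | hb0
            · exfalso; rw [← ha0, ← hb0] at hab; norm_num at hab
            · rw [← ha0]; simpa using mul_lt_mul_of_pos_left hr hb0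
          · have h1 : a * F p.1 < a * p.2 := mul_lt_mul_of_pos_left hp ha0
            have h2 : b * F r.1 ≤ b * r.2 := mul_le_mul_of_nonneg_left hr.le hb
            linarith
  have hSopen : IsOpen S := isOpen_lt (hc.comp continuous_fst) continuous_snd
  have hq : (q, F q) ∉ S := by simp [hS]
  obtain ⟨f, hf⟩ := geometric_hahn_banach_open_point hSconv hSopen hq
  set b : ℝ := f (0, 1) with hb
  have hsplit : ∀ x : Fin m → ℝ, ∀ t : ℝ, f (x, t) = f (x, 0) + t * b := by
    intro x t
    have : (x, t) = (x, (0:ℝ)) + t • ((0 : Fin m → ℝ), (1:ℝ)) := by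
      simp [Prod.ext_iff]
    rw [this, map_add, f.map_smul]; simp [hb, smul_eq_mul]
  have hkey : ∀ x t, F x < t → f (x, 0) + t * b < f (q, 0) + F q * b := by
    intro x t hxt
    have h := hf (x, t) hxt
    have e1 := hsplit x t
    have e2 := hsplit q (F q)
    linarith
  have hbneg : b < 0 := by
    have := hkey q (F q + 1) (by linarith)
    nlinarith
  have hmain : ∀ z, f (z, 0) + F z * b ≤ f (q, 0) + F q * b := by
    intro z
    by_contra hcon
    push_neg at hcon
    set ε := (f (z, 0) + F z * b - (f (q, 0) + F q * b)) / (-b) with hε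
    have hεpos : 0 < ε := div_pos (by linarith) (by linarith)
    have := hkey z (F z + ε) (by linarith)
    have hεb : ε * (-b) = f (z, 0) + F z * b - (f (q, 0) + F q * b) := by
      rw [hε, div_mul_cancel₀ _ (by linarith : (-b) ≠ 0)]
    nlinarith
  refine ⟨(-b)⁻¹ • (f.comp (ContinuousLinearMap.inl ℝ (Fin m → ℝ) ℝ)), fun z => ?_⟩
  have h1 := hmain z
  have hb' : 0 < -b := by linarith
  have hfsub : f (((z - q : Fin m → ℝ), (0:ℝ))) = f (z, 0) - f (q, 0) := by
    rw [← map_sub]; congr 1; simp [Prod.ext_iff]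
  simp only [ContinuousLinearMap.smul_apply, ContinuousLinearMap.coe_comp',
    Function.comp_apply, ContinuousLinearMap.inl_apply, smul_eq_mul]
  rw [hfsub]
  have h2 : (-b)⁻¹ * (f (z, 0) - f (q, 0)) ≤ F z - F q := by
    rw [inv_mul_le_iff₀ hb']
    nlinarith
  linarith

lemma convexOn_line (hF : ConvexOn ℝ Set.univ F) (y v : Fin m → ℝ) :
    ConvexOn ℝ Set.univ (fun t : ℝ => F (y + t • v)) := by
  refine ⟨convex_univ, ?_⟩
  intro t1 _ t2 _ a b ha hb hab
  have key : y + (a * t1 + b * t2) • v = a • (y + t1 • v) + b • (y + t2 • v) := by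
    have : a • (y + t1 • v) + b • (y + t2 • v)
        = (a + b) • y + (a * t1 + b * t2) • v := by module
    rw [this, hab, one_smul]
  dsimp only
  simp only [smul_eq_mul]
  rw [key]
  simpa [smul_eq_mul] using hF.2 (Set.mem_univ (y + t1 • v)) (Set.mem_univ (y + t2 • v)) ha hb hab

lemma quot_pair (hF : ConvexOn ℝ Set.univ F) (y v : Fin m → ℝ) {h₁ h₂ : ℝ}
    (h1 : h₁ ≠ 0) (h2 : h₂ ≠ 0) (hle : h₁ ≤ h₂) :
    (F (y + h₁ • v) - F y) / h₁ ≤ (F (y + h₂ • v) - F y) / h₂ := by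
  have hφ := convexOn_line hF y v
  have := hφ.secant_mono (a := 0) (x := h₁) (y := h₂) (Set.mem_univ _)
    (Set.mem_univ _) (Set.mem_univ _) h1 h2 hle
  simpa using this

lemma quot_lower (hF : ConvexOn ℝ Set.univ F) (y v : Fin m → ℝ) {h : ℝ} (hh : 0 < h) :
    F y - F (y - v) ≤ (F (y + h • v) - F y) / h := by
  have := quot_pair hF y v (h₁ := -1) (h₂ := h) (by norm_num) (ne_of_gt hh) (by linarith)
  simp only [neg_smul, one_smul] at this
  rw [div_neg, div_one, neg_sub, ← sub_eq_add_neg] at this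
  exact this

lemma dirDeriv_bddBelow (hF : ConvexOn ℝ Set.univ F) (y v : Fin m → ℝ) :
    BddBelow ((fun h : ℝ => (F (y + h • v) - F y) / h) '' Set.Ioi 0) := by
  refine ⟨F y - F (y - v), ?_⟩
  rintro a ⟨h, hh, rfl⟩
  exact quot_lower hF y v hh

lemma dirDeriv_le_quot (hF : ConvexOn ℝ Set.univ F) (y v : Fin m → ℝ) {h : ℝ} (hh : 0 < h) :
    dirDeriv F y v ≤ (F (y + h • v) - F y) / h :=
  csInf_le (dirDeriv_bddBelow hF y v) ⟨h, hh, rfl⟩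

lemma bregman_nonneg (hF : ConvexOn ℝ Set.univ F) (x y : Fin m → ℝ) :
    0 ≤ bregman F x y := by
  have := dirDeriv_le_quot hF y (x - y) (h := 1) one_pos
  simp only [one_smul, div_one, add_sub_cancel] at this
  unfold bregman
  linarith

lemma dirDeriv_ge_sub (hF : ConvexOn ℝ Set.univ F) (y v : Fin m → ℝ) :
    F y - F (y - v) ≤ dirDeriv F y v :=
  le_csInf ⟨_, ⟨1, by norm_num, rfl⟩⟩ (by rintro a ⟨h, hh, rfl⟩; exact quot_lower hF y v hh)

lemma tendsto_quot (hF : ConvexOn ℝ Set.univ F) (y v : Fin m → ℝ) :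
    Filter.Tendsto (fun k : ℕ => (F (y + ((1/2 : ℝ)^k) • v) - F y) / (1/2 : ℝ)^k)
      Filter.atTop (nhds (dirDeriv F y v)) := by
  set q : ℕ → ℝ := fun k => (F (y + ((1/2 : ℝ)^k) • v) - F y) / (1/2 : ℝ)^k with hq
  have hpow : ∀ k : ℕ, (0:ℝ) < (1/2:ℝ)^k := fun k => by positivity
  have hanti : Antitone q := by
    intro k l hkl
    exact quot_pair hF y v (ne_of_gt (hpow l)) (ne_of_gt (hpow k))
      (pow_le_pow_of_le_one (by norm_num) (by norm_num) hkl)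
  have hbdd : BddBelow (Set.range q) := by
    refine ⟨F y - F (y - v), ?_⟩
    rintro a ⟨k, rfl⟩
    exact quot_lower hF y v (hpow k)
  have heq : dirDeriv F y v = ⨅ k, q k := by
    refine le_antisymm (le_ciInf fun k => dirDeriv_le_quot hF y v (hpow k)) ?_
    refine le_csInf ⟨_, ⟨1, by norm_num, rfl⟩⟩ ?_
    rintro a ⟨h, hh, rfl⟩
    obtain ⟨k, hk⟩ := exists_pow_lt_of_lt_one hh (by norm_num : (1/2 : ℝ) < 1)
    exact le_trans (ciInf_le hbdd k) (quot_pair hF y v (ne_of_gt (hpow k)) (ne_of_gt hh) hk.le)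
  rw [heq]
  exact tendsto_atTop_ciInf hanti hbdd

lemma le_of_forall_affine (hF : ConvexOn ℝ Set.univ F) {u : ℕ → Fin m → ℝ}
    (hu : DenseRange u) (g : ℕ → (Fin m → ℝ) →L[ℝ] ℝ)
    (hg : ∀ k z, F (u k) + g k (z - u k) ≤ F z)
    {x : Fin m → ℝ} {c : ℝ} (h : ∀ k, F (u k) + g k (x - u k) ≤ c) : F x ≤ c := by
  by_contra hcon
  push_neg at hcon
  have hc : Continuous F := hF.locallyLipschitz.continuous
  set φ : (Fin m → ℝ) → ℝ := fun z => 2 * F z - F ((2:ℝ) • z - x) with hφ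
  have hφc : Continuous φ := by
    apply Continuous.sub (by fun_prop)
    exact hc.comp (by fun_prop)
  have hφx : φ x = F x := by
    simp only [hφ]
    have : (2:ℝ) • x - x = x := by module
    rw [this]; ring
  have hopen : IsOpen (φ ⁻¹' Set.Ioi c) := (isOpen_Ioi).preimage hφc
  have hne : (φ ⁻¹' Set.Ioi c).Nonempty := ⟨x, by simp [hφx, hcon]⟩
  obtain ⟨k, hk⟩ := hu.exists_mem_open hopen hne
  have hk' : c < φ (u k) := hk
  have h1 : F (u k) + g k (u k - x) ≤ F ((2:ℝ) • u k - x) := by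
    have := hg k ((2:ℝ) • u k - x)
    have e : (2:ℝ) • u k - x - u k = u k - x := by module
    rwa [e] at this
  have h2 : g k (x - u k) = - g k (u k - x) := by
    rw [← map_neg]; congr 1; module
  have := h k
  rw [h2] at this
  simp only [hφ] at hk'
  linarith

lemma condexp_clm {Ω : Type*} {𝒢 mΩ : MeasurableSpace Ω} {P : Measure Ω}
    [IsProbabilityMeasure P]
    (h𝒢 : 𝒢 ≤ mΩ) (g : (Fin m → ℝ) →L[ℝ] ℝ)
    {X : Ω → Fin m → ℝ} (hX : Integrable X P) :
    (P[fun ω => g (X ω)|𝒢]) =ᵐ[P] fun ω => g ((P[X|𝒢]) ω) := by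
  refine (ae_eq_condExp_of_forall_setIntegral_eq h𝒢 (g.integrable_comp hX)
    (fun s _ _ => (g.integrable_comp integrable_condExp).integrableOn)
    (fun s hs hμs => ?_) ?_).symm
  · rw [g.integral_comp_comm (μ := P.restrict s) integrable_condExp.integrableOn,
      setIntegral_condExp h𝒢 hX hs,
      ← g.integral_comp_comm (μ := P.restrict s) hX.integrableOn]
  · exact StronglyMeasurable.aestronglyMeasurable (g.continuous.comp_stronglyMeasurable stronglyMeasurable_condExp)

lemma condexp_convex_ge {Ω : Type*} {𝒢 mΩ : MeasurableSpace Ω} {P : Measure Ω}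
    [IsProbabilityMeasure P] (h𝒢 : 𝒢 ≤ mΩ)
    (hF : ConvexOn ℝ Set.univ F)
    {X Y : Ω → Fin m → ℝ} (hX : Integrable X P)
    (hFX : Integrable (fun ω => F (X ω)) P)
    (hY : (P[X|𝒢]) =ᵐ[P] Y) :
    ∀ᵐ ω ∂P, F (Y ω) ≤ (P[fun ω' => F (X ω')|𝒢]) ω := by
  obtain ⟨u, hu⟩ := TopologicalSpace.exists_dense_seq (Fin m → ℝ)
  choose g hg using fun k => exists_subgrad hF (u k)
  have key : ∀ k : ℕ, ∀ᵐ ω ∂P,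
      F (u k) + g k (Y ω - u k) ≤ (P[fun ω' => F (X ω')|𝒢]) ω := by
    intro k
    have heq : (fun ω => F (u k) + g k (X ω - u k))
        = fun ω => (F (u k) - g k (u k)) + g k (X ω) := by
      funext ω; rw [map_sub]; ring
    have hint : Integrable (fun ω => F (u k) + g k (X ω - u k)) P := by
      rw [heq]
      have := (integrable_const (μ := P) (F (u k) - g k (u k))).add ((g k).integrable_comp hX)
      simpa using this
    have hmono := condExp_mono (m := 𝒢) hint hFX
      (Filter.Eventually.of_forall fun ω => hg k (X ω))
    have hlin : (P[fun ω => F (u k) + g k (X ω - u k)|𝒢])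
        =ᵐ[P] fun ω => F (u k) + g k (Y ω - u k) := by
      rw [heq]
      have h1 : (P[fun ω => (F (u k) - g k (u k)) + g k (X ω)|𝒢])
          =ᵐ[P] fun ω => (F (u k) - g k (u k)) + (P[fun ω' => g k (X ω')|𝒢]) ω := by
        have := condExp_add (μ := P) (m := 𝒢)
          (integrable_const (F (u k) - g k (u k))) ((g k).integrable_comp hX)
        refine this.trans ?_
        have hc := condExp_const (μ := P) h𝒢 (F (u k) - g k (u k))
        filter_upwards [] with ω
        simp [hc]
      refine h1.trans ?_
      filter_upwards [condexp_clm h𝒢 (g k) hX, hY] with ω h2 h3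
      rw [h2, h3, map_sub]; ring
    filter_upwards [hmono, hlin] with ω h1 h2
    rw [← h2]; exact h1
  rw [← MeasureTheory.ae_all_iff] at key
  filter_upwards [key] with ω hω
  exact le_of_forall_affine hF hu g hg hω

lemma my_integral_sqrt_le {Ω : Type*} {mΩ : MeasurableSpace Ω} {P : Measure Ω}
    [IsProbabilityMeasure P] {f : Ω → ℝ}
    (hf : Integrable f P) (h0 : 0 ≤ᵐ[P] f) :
    ∫ ω, Real.sqrt (f ω) ∂P ≤ Real.sqrt (∫ ω, f ω ∂P) := by
  have hmeas : AEStronglyMeasurable (fun ω => Real.sqrt (f ω)) P :=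
    Real.continuous_sqrt.comp_aestronglyMeasurable hf.1
  have hsint : Integrable (fun ω => Real.sqrt (f ω)) P := by
    refine (hf.abs.add (integrable_const 1)).mono' hmeas ?_
    filter_upwards [] with ω
    simp only [Pi.add_apply]
    rw [Real.norm_eq_abs, abs_of_nonneg (Real.sqrt_nonneg _)]
    have hone : (1:ℝ) = Real.sqrt 1 := Real.sqrt_one.symm
    rcases le_or_gt (f ω) 1 with h | h
    · have h1 : Real.sqrt (f ω) ≤ 1 := by rw [hone]; exact Real.sqrt_le_sqrt h
      linarith [abs_nonneg (f ω)]
    · have hs1 : (1:ℝ) ≤ Real.sqrt (f ω) := by rw [hone]; exact Real.sqrt_le_sqrt h.le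
      have hsq : Real.sqrt (f ω) ^ 2 = f ω := Real.sq_sqrt (by linarith)
      have h2 : Real.sqrt (f ω) ≤ f ω := by nlinarith
      linarith [le_abs_self (f ω)]
  set I := ∫ ω, f ω ∂P with hI
  have hInn : 0 ≤ I := integral_nonneg_of_ae h0
  rcases eq_or_lt_of_le hInn with h | h
  · have hz : f =ᵐ[P] 0 := (integral_eq_zero_iff_of_nonneg_ae h0 hf).mp h.symm
    have : (fun ω => Real.sqrt (f ω)) =ᵐ[P] 0 := by
      filter_upwards [hz] with ω hω
      simp [hω]
    rw [integral_congr_ae this]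
    simp [Real.sqrt_nonneg]
  · have hsq : 0 < Real.sqrt I := Real.sqrt_pos.mpr h
    have hptw : ∀ᵐ ω ∂P, Real.sqrt (f ω) ≤ (f ω + I) / (2 * Real.sqrt I) := by
      filter_upwards [h0] with ω hω
      rw [le_div_iff₀ (by positivity)]
      nlinarith [sq_nonneg (Real.sqrt (f ω) - Real.sqrt I), Real.sq_sqrt hω,
        Real.sq_sqrt hInn, Real.sqrt_nonneg (f ω)]
    calc ∫ ω, Real.sqrt (f ω) ∂P ≤ ∫ ω, (f ω + I) / (2 * Real.sqrt I) ∂P := by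
          refine integral_mono_ae hsint ?_ hptw
          exact (hf.add (integrable_const I)).div_const _
      _ = (I + I) / (2 * Real.sqrt I) := by
          rw [integral_div, integral_add hf (integrable_const I)]
          simp [hI]
      _ = Real.sqrt I := by
          rw [eq_comm, eq_div_iff (by positivity)]
          nlinarith [Real.sq_sqrt hInn]

lemma my_integrable_sqrt {Ω : Type*} {mΩ : MeasurableSpace Ω} {P : Measure Ω}
    [IsProbabilityMeasure P] {f : Ω → ℝ} (hf : Integrable f P) :
    Integrable (fun ω => Real.sqrt (f ω)) P := by
  have hmeas : AEStronglyMeasurable (fun ω => Real.sqrt (f ω)) P :=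
    Real.continuous_sqrt.comp_aestronglyMeasurable hf.1
  refine (hf.abs.add (integrable_const 1)).mono' hmeas ?_
  filter_upwards [] with ω
  simp only [Pi.add_apply]
  rw [Real.norm_eq_abs, abs_of_nonneg (Real.sqrt_nonneg _)]
  have hone : (1:ℝ) = Real.sqrt 1 := Real.sqrt_one.symm
  rcases le_or_gt (f ω) 1 with h | h
  · have h1 : Real.sqrt (f ω) ≤ 1 := by rw [hone]; exact Real.sqrt_le_sqrt h
    linarith [abs_nonneg (f ω)]
  · have hs1 : (1:ℝ) ≤ Real.sqrt (f ω) := by rw [hone]; exact Real.sqrt_le_sqrt h.le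
    have hsq : Real.sqrt (f ω) ^ 2 = f ω := Real.sq_sqrt (by linarith)
    have h2 : Real.sqrt (f ω) ≤ f ω := by nlinarith
    linarith [le_abs_self (f ω)]

lemma integral_convex_ge {Ω : Type*} {𝒢 mΩ : MeasurableSpace Ω} {P : Measure Ω}
    [IsProbabilityMeasure P] (h𝒢 : 𝒢 ≤ mΩ) (hF : ConvexOn ℝ Set.univ F)
    {X Y : Ω → Fin m → ℝ} (hX : Integrable X P)
    (hFX : Integrable (fun ω => F (X ω)) P) (hFY : Integrable (fun ω => F (Y ω)) P)
    (hY : (P[X|𝒢]) =ᵐ[P] Y) :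
    ∫ ω, F (Y ω) ∂P ≤ ∫ ω, F (X ω) ∂P := by
  have h := condexp_convex_ge h𝒢 hF hX hFX hY
  calc ∫ ω, F (Y ω) ∂P ≤ ∫ ω, (P[fun ω' => F (X ω')|𝒢]) ω ∂P :=
        integral_mono_ae hFY integrable_condExp h
    _ = ∫ ω, F (X ω) ∂P := integral_condExp h𝒢

end Aux

open Filter

/-- **Generalised information-theoretic regret bound.**  If an adapted martingale `M`
with values in `D` and convex potential `F` with finite `F`-diameter on `D` satisfy
`E[Δ_t | 𝔉_t] ≤ α + √(β E[D_F(M_{t+1}, M_t) | 𝔉_t])` a.s. for all rounds `t`, then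
`E[∑_t Δ_t] ≤ α n + √(n β diam_F(D))`.  (Rounds are indexed `0, …, n-1` and the
martingale is indexed `0, …, n`.) -/
theorem bregman_regret_bound {Ω : Type*} {mΩ : MeasurableSpace Ω}
    {P : Measure Ω} [IsProbabilityMeasure P] {m n : ℕ}
    (𝔉 : Filtration ℕ mΩ)
    (D : Set (Fin m → ℝ)) (F : (Fin m → ℝ) → ℝ)
    (hF : ConvexOn ℝ Set.univ F)
    (hdiam : BddAbove {z | ∃ x ∈ D, ∃ y ∈ D, z = F x - F y})
    (M : ℕ → Ω → Fin m → ℝ) (hM : Martingale M 𝔉 P)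
    (hMD : ∀ t ≤ n, ∀ᵐ ω ∂P, M t ω ∈ D)
    (Δ : ℕ → Ω → ℝ) (hΔ : ∀ t < n, Integrable (Δ t) P)
    (α β : ℝ) (hα : 0 ≤ α) (hβ : 0 ≤ β)
    (hmeas : ∀ t < n, Measurable fun ω => bregman F (M (t + 1) ω) (M t ω))
    (hbound : ∀ t < n, ∀ᵐ ω ∂P,
      (P[Δ t | 𝔉 t]) ω ≤
        α + Real.sqrt (β * (P[fun ω' => bregman F (M (t + 1) ω') (M t ω') | 𝔉 t]) ω)) :
    ∫ ω, (∑ t ∈ Finset.range n, Δ t ω) ∂P ≤ α * n + Real.sqrt (n * β * bregDiam F D) := by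
  rcases Nat.eq_zero_or_pos n with rfl | hn
  · simp
  obtain ⟨ω₀, hω₀⟩ := (hMD 0 (Nat.zero_le n)).exists
  set y₀ := M 0 ω₀ with hy₀
  set dD := bregDiam F D with hdD
  have hdnonneg : 0 ≤ dD := by
    have : (0:ℝ) ∈ {z | ∃ x ∈ D, ∃ y ∈ D, z = F x - F y} := ⟨y₀, hω₀, y₀, hω₀, by ring⟩
    exact le_csSup hdiam this
  have hc : Continuous F := hF.locallyLipschitz.continuous
  have hMmeas : ∀ t, AEStronglyMeasurable (M t) P := fun t =>
    ((hM.stronglyAdapted t).mono (𝔉.le t)).aestronglyMeasurable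
  have hFMint : ∀ t, t ≤ n → Integrable (fun ω => F (M t ω)) P := by
    intro t ht
    refine Integrable.mono' (integrable_const (|F y₀| + dD))
      (hc.comp_aestronglyMeasurable (hMmeas t)) ?_
    filter_upwards [hMD t ht] with ω hω
    rw [Real.norm_eq_abs, abs_le]
    constructor
    · have h1 : F y₀ - F (M t ω) ≤ dD := le_csSup hdiam ⟨y₀, hω₀, M t ω, hω, rfl⟩
      have h2 := neg_abs_le (F y₀)
      linarith
    · have h1 : F (M t ω) - F y₀ ≤ dD := le_csSup hdiam ⟨M t ω, hω, y₀, hω₀, rfl⟩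
      have h2 := le_abs_self (F y₀)
      linarith
  have hinc : ∀ t, t < n → ∫ ω, F (M t ω) ∂P ≤ ∫ ω, F (M (t+1) ω) ∂P := fun t ht =>
    integral_convex_ge (𝔉.le t) hF (hM.integrable (t+1)) (hFMint (t+1) ht)
      (hFMint t ht.le) (hM.condExp_ae_eq (Nat.le_succ t))
  set g : ℕ → Ω → ℝ :=
    fun t => P[fun ω' => bregman F (M (t + 1) ω') (M t ω')|𝔉 t] with hgdef
  have hg_nonneg : ∀ t, 0 ≤ᵐ[P] g t := fun t =>
    condExp_nonneg (Filter.Eventually.of_forall fun ω => bregman_nonneg hF _ _)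
  set c : ℕ → ℝ := fun t => ∫ ω, g t ω ∂P with hcdef
  have hc_nonneg : ∀ t, 0 ≤ c t := fun t => integral_nonneg_of_ae (hg_nonneg t)
  -- per-round bound
  have hstep : ∀ t, t < n → ∫ ω, Δ t ω ∂P ≤ α + Real.sqrt (β * c t) := by
    intro t ht
    have hgint : Integrable (g t) P := integrable_condExp
    have hβgint : Integrable (fun ω => β * g t ω) P := hgint.const_mul β
    have hsqint : Integrable (fun ω => Real.sqrt (β * g t ω)) P := my_integrable_sqrt hβgint
    have h1 : ∫ ω, Δ t ω ∂P = ∫ ω, (P[Δ t|𝔉 t]) ω ∂P :=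
      (integral_condExp (𝔉.le t)).symm
    have h2 : ∫ ω, (P[Δ t|𝔉 t]) ω ∂P
        ≤ ∫ ω, (α + Real.sqrt (β * g t ω)) ∂P :=
      integral_mono_ae integrable_condExp ((integrable_const α).add hsqint) (hbound t ht)
    have h3 : ∫ ω, (α + Real.sqrt (β * g t ω)) ∂P
        = α + ∫ ω, Real.sqrt (β * g t ω) ∂P := by
      rw [integral_add (integrable_const α) hsqint, integral_const]
      simp
    have h4 : ∫ ω, Real.sqrt (β * g t ω) ∂P ≤ Real.sqrt (β * c t) := by
      have := my_integral_sqrt_le hβgint ?_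
      · rwa [integral_const_mul] at this
      · filter_upwards [hg_nonneg t] with ω hω
        exact mul_nonneg hβ hω
    rw [h1]
    calc ∫ ω, (P[Δ t|𝔉 t]) ω ∂P ≤ α + ∫ ω, Real.sqrt (β * g t ω) ∂P := by
          rw [← h3]; exact h2
      _ ≤ α + Real.sqrt (β * c t) := by linarith
  -- telescoping bound on the sum of c
  have htel : ∀ t, t < n →
      c t ≤ (∫ ω, F (M (t+1) ω) ∂P) - ∫ ω, F (M t ω) ∂P := by
    intro t ht
    by_cases hBint : Integrable (fun ω => bregman F (M (t+1) ω) (M t ω)) P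
    · have hceq : c t = ∫ ω, bregman F (M (t+1) ω) (M t ω) ∂P := by
        simp only [hcdef, hgdef]
        exact integral_condExp (𝔉.le t)
      set d : Ω → ℝ := fun ω => dirDeriv F (M t ω) (M (t+1) ω - M t ω) with hddef
      have hdeq : d = fun ω =>
          (F (M (t+1) ω) - F (M t ω)) - bregman F (M (t+1) ω) (M t ω) := by
        funext ω; simp only [hddef, bregman]; ring
      have hdint : Integrable d P := by
        rw [hdeq]; exact ((hFMint (t+1) ht).sub (hFMint t ht.le)).sub hBint
      -- E[d] ≥ 0 via monotone approximation by difference quotients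
      have hdpos : 0 ≤ ∫ ω, d ω ∂P := by
        set v : Ω → Fin m → ℝ := M (t+1) - M t with hvdef
        have hvint : Integrable v P := (hM.integrable (t+1)).sub (hM.integrable t)
        have hvapp : ∀ ω, v ω = M (t+1) ω - M t ω := fun ω => rfl
        have hdv : ∀ ω, d ω = dirDeriv F (M t ω) (v ω) := fun ω => rfl
        set Q : ℕ → Ω → ℝ := fun k ω =>
          (F (M t ω + ((1/2:ℝ)^k) • v ω) - F (M t ω)) / (1/2:ℝ)^k with hQdef
        have hpow : ∀ k : ℕ, (0:ℝ) < (1/2:ℝ)^k := fun k => by positivity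
        have hpow1 : ∀ k : ℕ, (1/2:ℝ)^k ≤ 1 :=
          fun k => pow_le_one₀ (by norm_num) (by norm_num)
        have hXmeas : ∀ k : ℕ, AEStronglyMeasurable
            (fun ω => M t ω + ((1/2:ℝ)^k) • v ω) P := by
          intro k
          exact (hMmeas t).add ((((hMmeas (t+1)).sub (hMmeas t))).const_smul ((1/2:ℝ)^k))
        have hXint : ∀ k : ℕ, Integrable (fun ω => M t ω + ((1/2:ℝ)^k) • v ω) P :=
          fun k => (hM.integrable t).add (hvint.smul ((1/2:ℝ)^k))
        have hlo : ∀ k : ℕ, ∀ ω, F (M t ω) + (1/2:ℝ)^k * d ω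
            ≤ F (M t ω + ((1/2:ℝ)^k) • v ω) := by
          intro k ω
          have h := dirDeriv_le_quot hF (M t ω) (v ω) (hpow k)
          rw [le_div_iff₀ (hpow k)] at h
          rw [hdv ω]
          linarith [h]
        have hhi : ∀ k : ℕ, ∀ ω, F (M t ω + ((1/2:ℝ)^k) • v ω)
            ≤ (1 - (1/2:ℝ)^k) * F (M t ω) + (1/2:ℝ)^k * F (M (t+1) ω) := by
          intro k ω
          have hrw : M t ω + ((1/2:ℝ)^k) • v ω
              = (1 - (1/2:ℝ)^k) • M t ω + ((1/2:ℝ)^k) • M (t+1) ω := by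
            rw [hvapp ω]; module
          rw [hrw]
          have := hF.2 (Set.mem_univ (M t ω)) (Set.mem_univ (M (t+1) ω))
            (by linarith [hpow1 k] : (0:ℝ) ≤ 1 - (1/2:ℝ)^k) (hpow k).le (by ring)
          simpa [smul_eq_mul] using this
        have hFXint : ∀ k : ℕ, Integrable
            (fun ω => F (M t ω + ((1/2:ℝ)^k) • v ω)) P := by
          intro k
          set lo : Ω → ℝ := fun ω => F (M t ω) + (1/2:ℝ)^k * d ω with hlodef
          set hi : Ω → ℝ := fun ω =>
            (1 - (1/2:ℝ)^k) * F (M t ω) + (1/2:ℝ)^k * F (M (t+1) ω) with hhidef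
          have hloint : Integrable lo P := (hFMint t ht.le).add (hdint.const_mul _)
          have hhiint : Integrable hi P :=
            ((hFMint t ht.le).const_mul _).add ((hFMint (t+1) ht).const_mul _)
          refine (hloint.abs.add hhiint.abs).mono'
            (hc.comp_aestronglyMeasurable (hXmeas k)) ?_
          filter_upwards [] with ω
          simp only [Pi.add_apply]
          rw [Real.norm_eq_abs, abs_le]
          constructor
          · have := hlo k ω
            have h2 := neg_abs_le (lo ω)
            have h3 := abs_nonneg (hi ω)
            simp only [hlodef] at *
            linarith
          · have := hhi k ω
            have h2 := le_abs_self (hi ω)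
            have h3 := abs_nonneg (lo ω)
            simp only [hhidef] at *
            linarith
        have hQint : ∀ k : ℕ, Integrable (Q k) P := fun k =>
          (((hFXint k).sub (hFMint t ht.le)).div_const _)
        have hQpos : ∀ k : ℕ, 0 ≤ ∫ ω, Q k ω ∂P := by
          intro k
          have hcond : (P[fun ω => M t ω + ((1/2:ℝ)^k) • v ω|𝔉 t]) =ᵐ[P] M t := by
            have e0 : (fun ω => M t ω + ((1/2:ℝ)^k) • v ω)
                = M t + ((1/2:ℝ)^k) • v := rfl
            rw [e0]
            have e5 : (P[M t|𝔉 t]) = M t :=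
              condExp_of_stronglyMeasurable (𝔉.le t) (hM.stronglyAdapted t) (hM.integrable t)
            have e1 : (P[M t + ((1/2:ℝ)^k) • v|𝔉 t])
                =ᵐ[P] (P[M t|𝔉 t]) + (P[((1/2:ℝ)^k) • v|𝔉 t]) :=
              condExp_add (hM.integrable t) (hvint.smul _) _
            have e2 : (P[((1/2:ℝ)^k) • v|𝔉 t]) =ᵐ[P] ((1/2:ℝ)^k) • (P[v|𝔉 t]) :=
              condExp_smul _ _ _
            have e3 : (P[v|𝔉 t]) =ᵐ[P] (P[M (t+1)|𝔉 t]) - (P[M t|𝔉 t]) := by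
              rw [hvdef]
              exact condExp_sub (hM.integrable (t+1)) (hM.integrable t) _
            have e4 := hM.condExp_ae_eq (Nat.le_succ t)
            filter_upwards [e1, e2, e3, e4] with ω h1 h2 h3 h4
            rw [h1, Pi.add_apply, e5, h2, Pi.smul_apply, h3, Pi.sub_apply, h4, e5]
            simp
          have hjen : ∫ ω, F (M t ω) ∂P
              ≤ ∫ ω, F (M t ω + ((1/2:ℝ)^k) • v ω) ∂P :=
            integral_convex_ge (𝔉.le t) hF (hXint k) (hFXint k)
              (hFMint t ht.le) hcond
          have : ∫ ω, Q k ω ∂P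
              = ((∫ ω, F (M t ω + ((1/2:ℝ)^k) • v ω) ∂P) - ∫ ω, F (M t ω) ∂P)
                / (1/2:ℝ)^k := by
            simp only [hQdef]
            rw [integral_div, integral_sub (hFXint k) (hFMint t ht.le)]
          rw [this]
          apply div_nonneg _ (hpow k).le
          linarith
        have hQtend : ∀ ω, Tendsto (fun k => Q k ω) atTop (nhds (d ω)) := fun ω =>
          tendsto_quot hF (M t ω) (v ω)
        have hQdom : ∀ k : ℕ, ∀ᵐ ω ∂P, ‖Q k ω‖ ≤ |Q 0 ω| + |d ω| := by
          intro k
          filter_upwards [] with ω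
          have hdk : d ω ≤ Q k ω :=
            dirDeriv_le_quot hF (M t ω) (v ω) (hpow k)
          have hk0 : Q k ω ≤ Q 0 ω :=
            quot_pair hF (M t ω) (v ω) (ne_of_gt (hpow k)) (ne_of_gt (hpow 0))
              (pow_le_pow_of_le_one (by norm_num) (by norm_num) (Nat.zero_le k))
          rw [Real.norm_eq_abs, abs_le]
          constructor
          · have := neg_abs_le (d ω); have := abs_nonneg (Q 0 ω); linarith [neg_abs_le (d ω)]
          · have := le_abs_self (Q 0 ω); have := abs_nonneg (d ω); linarith
        have hlim : Tendsto (fun k => ∫ ω, Q k ω ∂P) atTop (nhds (∫ ω, d ω ∂P)) := by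
          refine tendsto_integral_of_dominated_convergence (fun ω => |Q 0 ω| + |d ω|)
            (fun k => (hQint k).1) ((hQint 0).abs.add hdint.abs) hQdom ?_
          filter_upwards [] with ω
          exact hQtend ω
        exact ge_of_tendsto' hlim hQpos
      have hsplit : ∫ ω, bregman F (M (t+1) ω) (M t ω) ∂P
          = (∫ ω, F (M (t+1) ω) ∂P) - (∫ ω, F (M t ω) ∂P) - ∫ ω, d ω ∂P := by
        have e : (fun ω => bregman F (M (t+1) ω) (M t ω))
            = fun ω => (F (M (t+1) ω) - F (M t ω)) - d ω := by
          funext ω; simp only [hddef, bregman]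
        have hFsubint : Integrable (fun ω => F (M (t+1) ω) - F (M t ω)) P :=
          (hFMint (t+1) ht).sub (hFMint t ht.le)
        rw [e, integral_sub hFsubint hdint,
          integral_sub (hFMint (t+1) ht) (hFMint t ht.le)]
      rw [hceq, hsplit]
      linarith
    · have hgz : g t = 0 := by
        simp only [hgdef]
        exact condExp_of_not_integrable hBint
      have hcz : c t = 0 := by simp [hcdef, hgz]
      rw [hcz]
      linarith [hinc t ht]
  have hcsum : ∑ t ∈ Finset.range n, c t ≤ dD := by
    have h1 : ∑ t ∈ Finset.range n, c t
        ≤ ∑ t ∈ Finset.range n, ((∫ ω, F (M (t+1) ω) ∂P) - ∫ ω, F (M t ω) ∂P) :=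
      Finset.sum_le_sum fun t ht => htel t (Finset.mem_range.mp ht)
    have h2 : ∑ t ∈ Finset.range n, ((∫ ω, F (M (t+1) ω) ∂P) - ∫ ω, F (M t ω) ∂P)
        = (∫ ω, F (M n ω) ∂P) - ∫ ω, F (M 0 ω) ∂P :=
      Finset.sum_range_sub (fun s => ∫ ω, F (M s ω) ∂P) n
    have h3 : (∫ ω, F (M n ω) ∂P) - ∫ ω, F (M 0 ω) ∂P ≤ dD := by
      rw [← integral_sub (hFMint n le_rfl) (hFMint 0 (Nat.zero_le n))]
      calc ∫ ω, (F (M n ω) - F (M 0 ω)) ∂P ≤ ∫ _ω, dD ∂P := by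
            refine integral_mono_ae ((hFMint n le_rfl).sub (hFMint 0 (Nat.zero_le n)))
              (integrable_const dD) ?_
            filter_upwards [hMD n le_rfl, hMD 0 (Nat.zero_le n)] with ω hωn hω0
            exact le_csSup hdiam ⟨M n ω, hωn, M 0 ω, hω0, rfl⟩
        _ = dD := by simp
    linarith
  -- final assembly
  rw [integral_finset_sum _ (fun t ht => hΔ t (Finset.mem_range.mp ht))]
  have hsum1 : ∑ t ∈ Finset.range n, ∫ ω, Δ t ω ∂P
      ≤ ∑ t ∈ Finset.range n, (α + Real.sqrt (β * c t)) :=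
    Finset.sum_le_sum fun t ht => hstep t (Finset.mem_range.mp ht)
  have hsum2 : ∑ t ∈ Finset.range n, (α + Real.sqrt (β * c t))
      = α * n + ∑ t ∈ Finset.range n, Real.sqrt (β * c t) := by
    rw [Finset.sum_add_distrib, Finset.sum_const, Finset.card_range, nsmul_eq_mul]
    ring
  set L := ∑ t ∈ Finset.range n, Real.sqrt (β * c t) with hL
  have hLnonneg : 0 ≤ L := Finset.sum_nonneg fun t _ => Real.sqrt_nonneg _
  have hL2 : L^2 ≤ n * (β * dD) := by
    have hcs := sq_sum_le_card_mul_sum_sq (s := Finset.range n)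
      (f := fun t => Real.sqrt (β * c t))
    rw [Finset.card_range] at hcs
    have he : ∑ t ∈ Finset.range n, (Real.sqrt (β * c t))^2
        = ∑ t ∈ Finset.range n, β * c t := by
      refine Finset.sum_congr rfl fun t _ => ?_
      exact Real.sq_sqrt (mul_nonneg hβ (hc_nonneg t))
    rw [he] at hcs
    calc L^2 ≤ (n : ℝ) * ∑ t ∈ Finset.range n, β * c t := hcs
      _ = (n : ℝ) * (β * ∑ t ∈ Finset.range n, c t) := by
          rw [← Finset.mul_sum]
      _ ≤ (n : ℝ) * (β * dD) := by
          have : β * ∑ t ∈ Finset.range n, c t ≤ β * dD :=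
            mul_le_mul_of_nonneg_left hcsum hβ
          exact mul_le_mul_of_nonneg_left this (Nat.cast_nonneg n)
  have hLle : L ≤ Real.sqrt (n * β * dD) := by
    have : L = Real.sqrt (L^2) := (Real.sqrt_sq hLnonneg).symm
    rw [this]
    apply Real.sqrt_le_sqrt
    calc L^2 ≤ (n:ℝ) * (β * dD) := hL2
      _ = (n:ℝ) * β * dD := by ring
  calc ∑ t ∈ Finset.range n, ∫ ω, Δ t ω ∂P
      ≤ α * n + L := by rw [← hsum2]; exact hsum1
    _ ≤ α * n + Real.sqrt (n * β * dD) := by linarith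

end
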